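/- Let t > |s| for real constants t, s, and let a(x₁) = t·tanh(x₁) + s. Then lim_{R→∞} ∫_{-R}^{R} e^{-∫₀^{x₁} a(r)dr} dx₁ < ∞, i.e. the function x₁ ↦ e^{-∫₀^{x₁} a(r)dr} is integrable over ℝ. -/

import Mathlib

open Real Filter MeasureTheory intervalIntegral

lemma integrable_exp_neg_mul_abs' {c : ℝ} (hc : 0 < c) :
    Integrable (fun x : ℝ => Real.exp (-(c * |x|))) := by
  have h1 : IntegrableOn (fun x : ℝ => Real.exp (-(c * |x|))) (Set.Ici 0) := by
    rw [integrableOn_Ici_iff_integrableOn_Ioi]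
    apply (exp_neg_integrableOn_Ioi 0 hc).congr_fun ?_ measurableSet_Ioi
    intro x hx; simp [abs_of_pos (Set.mem_Ioi.mp hx)]
  have h2 : IntegrableOn (fun x : ℝ => Real.exp (-(c * |x|))) (Set.Iic 0) := by
    have h3 := ((integrable_indicator_iff measurableSet_Ici).mpr h1).comp_neg
    refine (integrable_indicator_iff measurableSet_Iic).mp ?_
    apply h3.congr
    filter_upwards with x
    by_cases hx : x ≤ 0
    · simp [Set.indicator, hx, neg_nonneg.mpr hx]
    · simp [Set.indicator, hx, not_le.mp hx, (neg_neg_iff_pos.mpr (not_le.mp hx)).not_ge,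
        le_of_not_ge]
  rw [← integrableOn_univ, ← Set.Iic_union_Ici (a := (0:ℝ))]
  exact h2.union h1

/-- For `a(x₁) = t·tanh(x₁) + s` with `t > |s|`, the function
`x₁ ↦ e^{-∫₀^{x₁} a}` is integrable over `ℝ`, and the symmetric integrals
`∫_{-R}^{R}` converge to the (finite) full integral as `R → ∞`. -/
theorem exp_neg_int_tanh_advection (t s : ℝ) (hts : |s| < t) :
    let a : ℝ → ℝ := fun r => t * Real.tanh r + s
    Integrable (fun x : ℝ => Real.exp (-(∫ r in (0 : ℝ)..x, a r))) ∧
    Tendsto (fun R : ℝ =>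
        ∫ x in (-R)..R, Real.exp (-(∫ r in (0 : ℝ)..x, a r)))
      atTop (nhds (∫ x : ℝ, Real.exp (-(∫ r in (0 : ℝ)..x, a r)))) := by
  intro a
  have ht : 0 < t := lt_of_le_of_lt (abs_nonneg s) hts
  -- Compute the inner integral explicitly.
  have hA : ∀ x : ℝ, (∫ r in (0 : ℝ)..x, a r) = t * Real.log (Real.cosh x) + s * x := by
    intro x
    have hderiv : ∀ y ∈ Set.uIcc (0 : ℝ) x,
        HasDerivAt (fun y => t * Real.log (Real.cosh y) + s * y) (a y) y := by
      intro y _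
      have h1 : HasDerivAt (fun y => Real.log (Real.cosh y)) (Real.tanh y) y := by
        have := (Real.hasDerivAt_cosh y).log (Real.cosh_pos y).ne'
        simpa [Real.tanh_eq_sinh_div_cosh] using this
      have := (h1.const_mul t).add ((hasDerivAt_id y).const_mul s)
      simpa [a, mul_comm, Pi.add_def] using this
    have htanh : Continuous Real.tanh := by
      have h : Real.tanh = fun y => Real.sinh y / Real.cosh y :=
        funext fun y => Real.tanh_eq_sinh_div_cosh y
      rw [h]
      exact Real.continuous_sinh.div Real.continuous_cosh fun y => (Real.cosh_pos y).ne'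
    have hint : IntervalIntegrable a volume 0 x :=
      ((continuous_const.mul htanh).add continuous_const).intervalIntegrable 0 x
    rw [intervalIntegral.integral_eq_sub_of_hasDerivAt hderiv hint]
    simp [Real.cosh_zero]
  -- The pointwise bound.
  have hbound : ∀ x : ℝ, Real.exp (-(∫ r in (0 : ℝ)..x, a r)) ≤
      Real.exp (t * Real.log 2) * Real.exp (-((t - |s|) * |x|)) := by
    intro x
    rw [hA x, ← Real.exp_add]
    apply Real.exp_le_exp.mpr
    have hlc : |x| - Real.log 2 ≤ Real.log (Real.cosh x) := by
      have h1 : Real.exp |x| / 2 ≤ Real.cosh x := by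
        rw [Real.cosh_eq]
        gcongr
        rcases abs_cases x with ⟨h, _⟩ | ⟨h, _⟩
        · rw [h]; nlinarith [Real.exp_pos (-x)]
        · rw [h]; nlinarith [Real.exp_pos x]
      have h2 := Real.log_le_log (by positivity) h1
      rwa [Real.log_div (Real.exp_ne_zero _) two_ne_zero, Real.log_exp] at h2
    have hsx : -(|s| * |x|) ≤ s * x := by
      have := neg_abs_le (s * x)
      rwa [abs_mul] at this
    nlinarith [abs_nonneg x]
  -- Integrability.
  have hcont : Continuous (fun x : ℝ => Real.exp (-(∫ r in (0 : ℝ)..x, a r))) := by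
    have : (fun x : ℝ => Real.exp (-(∫ r in (0 : ℝ)..x, a r))) =
        fun x : ℝ => Real.exp (-(t * Real.log (Real.cosh x) + s * x)) := by
      funext x; rw [hA x]
    rw [this]
    exact Real.continuous_exp.comp <| Continuous.neg <|
      (continuous_const.mul (Real.continuous_cosh.log fun y => (Real.cosh_pos y).ne')).add
        (continuous_const.mul continuous_id)
  have hInt : Integrable (fun x : ℝ => Real.exp (-(∫ r in (0 : ℝ)..x, a r))) := by
    apply Integrable.mono'
      ((integrable_exp_neg_mul_abs' (sub_pos.mpr hts)).const_mul (Real.exp (t * Real.log 2)))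
      hcont.aestronglyMeasurable
    filter_upwards with x
    rw [Real.norm_eq_abs, abs_of_pos (Real.exp_pos _)]
    exact hbound x
  refine ⟨hInt, ?_⟩
  exact intervalIntegral_tendsto_integral hInt tendsto_neg_atTop_atBot tendsto_id
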